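/- Let $G$ be a finite group acting on a finite partially ordered set $P$ so that the action preserves the order. Define the strong compatibility graph $\widetilde{C}_P$ to have vertex set $P$, with $x$ and $y$ adjacent iff $y \notin \{g \cdot x : g \in G\}$ and there exists $g \in G$, $g \neq e$, such that $x$ and $g\cdot y$ are comparable in $P$. Then the chromatic number of $\widetilde{C}_P$ is at most $\dim(P)+1$, where $\dim(P)$ is the length of the longest chain in $P$ (number of elements minus one). -/

import Mathlib

/-- The strong compatibility graph of a `G`-poset `P`: vertices are elements of `P`,
and `x, y` are adjacent iff `y` is not in the `G`-orbit of `x` and there is a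
nonidentity `g` such that `x` and `g • y` are comparable. -/
def strongCompat (G P : Type*) [Group G] [PartialOrder P] [MulAction G P] :
    SimpleGraph P :=
  SimpleGraph.fromRel (fun x y =>
    (¬ ∃ g : G, g • x = y) ∧ ∃ g : G, g ≠ 1 ∧ (x ≤ g • y ∨ g • y ≤ x))

/-- If a finite group `G` acts on a finite poset `P` preserving the order, then the
chromatic number of the strong compatibility graph is at most `dim P + 1`, where the
dimension is the maximal length of a chain (every chain has at most `d + 1` elements). -/
theorem chromatic_strongCompat_le_dim_add_one
    (G P : Type*) [Group G] [Fintype G] [PartialOrder P] [Fintype P] [MulAction G P]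
    (hmono : ∀ (g : G) (x y : P), x ≤ y → g • x ≤ g • y)
    (d : ℕ)
    (hdim : ∀ l : List P, l.Chain' (· < ·) → l.length ≤ d + 1) :
    (strongCompat G P).chromaticNumber ≤ ((d + 1 : ℕ) : ℕ∞) := by
  -- every height is at most d
  have hht : ∀ x : P, Order.height x ≤ (d : ℕ∞) := by
    intro x
    apply Order.height_le
    intro p _
    have := hdim p.toList p.isChain_toList
    rw [p.length_toList] at this
    exact_mod_cast Nat.le_of_succ_le_succ this
  -- action by order isomorphisms
  have hiso : ∀ (g : G) (y : P), Order.height (g • y) = Order.height y := by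
    intro g y
    let f : P ≃o P :=
      { toEquiv := MulAction.toPerm g
        map_rel_iff' := by
          intro a b
          constructor
          · intro h
            have := hmono g⁻¹ _ _ h
            simpa using this
          · exact hmono g a b }
    show Order.height (f y) = Order.height y
    exact Order.height_orderIso f y
  -- heights differ along the relation
  have key : ∀ x y : P,
      ((¬ ∃ g : G, g • x = y) ∧ ∃ g : G, g ≠ 1 ∧ (x ≤ g • y ∨ g • y ≤ x)) →
      Order.height x ≠ Order.height y := by
    intro x y ⟨horb, g, _, hcomp⟩ heq
    have hgy : Order.height (g • y) = Order.height x := by rw [hiso, heq]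
    have hfx : Order.height x < ⊤ := lt_of_le_of_lt (hht x) (ENat.coe_lt_top d)
    have hfy : Order.height (g • y) < ⊤ := hgy ▸ hfx
    have : x = g • y := by
      rcases hcomp with h | h
      · rcases eq_or_lt_of_le h with h' | h'
        · exact h'
        · exact absurd (hgy ▸ Order.height_strictMono h' hfx) (lt_irrefl _)
      · rcases eq_or_lt_of_le h with h' | h'
        · exact h'.symm
        · exact absurd (hgy ▸ Order.height_strictMono h' hfy) (lt_irrefl _)
    exact horb ⟨g⁻¹, by rw [this]; simp⟩
  -- build the coloring
  have hlt : ∀ x : P, (Order.height x).toNat < d + 1 := by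
    intro x
    have := hht x
    have hfx : Order.height x ≠ ⊤ := (lt_of_le_of_lt this (ENat.coe_lt_top d)).ne
    have : (Order.height x).toNat ≤ d := by
      rw [← ENat.toNat_coe d]
      exact ENat.toNat_le_toNat this (by simp)
    omega
  have C : (strongCompat G P).Coloring (Fin (d + 1)) := by
    refine SimpleGraph.Coloring.mk (fun x => ⟨(Order.height x).toNat, hlt x⟩) ?_
    intro x y hadj
    simp only [strongCompat, SimpleGraph.fromRel_adj] at hadj
    obtain ⟨hne, h | h⟩ := hadj
    all_goals
      intro hceq
      simp only [Fin.mk.injEq] at hceq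
      have hx : Order.height x ≠ ⊤ := (lt_of_le_of_lt (hht x) (ENat.coe_lt_top d)).ne
      have hy : Order.height y ≠ ⊤ := (lt_of_le_of_lt (hht y) (ENat.coe_lt_top d)).ne
      have heq : Order.height x = Order.height y := by
        rw [← ENat.coe_toNat hx, ← ENat.coe_toNat hy, hceq]
    · exact key x y h heq
    · exact key y x h heq.symm
  simpa using C.colorable.chromaticNumber_le
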